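/- arXiv:1006.2592 — 4 statements merged into one kernel-verified Lean document; each statement's English description precedes it below -/
import Mathlib

section
/- Let λ > 0, η ≥ 0, and t ∈ ℝ with |t| ≠ λ. The function f(θ) = (t−θ)²/2 + (λ²/(2(1+η)))·1_{θ≠0} + (η/2)θ² is uniquely minimized over θ ∈ ℝ at the hard-ridge threshold θ̂ = 0 if |t| < λ and θ̂ = t/(1+η) if |t| > λ. -/
/-- Hard-ridge (hybrid) thresholding function. -/
noncomputable def hardRidgeThresh (t lam eta : ℝ) : ℝ :=
  if |t| < lam then 0 else t / (1 + eta)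

theorem hardRidge_unique_minimizer (lam eta t : ℝ)
    (hlam : 0 < lam) (heta : 0 ≤ eta) (ht : |t| ≠ lam) :
    ∀ θ : ℝ, θ ≠ hardRidgeThresh t lam eta →
      (t - hardRidgeThresh t lam eta) ^ 2 / 2
          + (if hardRidgeThresh t lam eta ≠ 0 then lam ^ 2 / (2 * (1 + eta)) else 0)
          + (eta / 2) * (hardRidgeThresh t lam eta) ^ 2
        < (t - θ) ^ 2 / 2 + (if θ ≠ 0 then lam ^ 2 / (2 * (1 + eta)) else 0)
          + (eta / 2) * θ ^ 2 := by
  have hc : (0:ℝ) < 1 + eta := by linarith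
  have hc' : (1:ℝ) + eta ≠ 0 := ne_of_gt hc
  intro θ hθ
  by_cases h : |t| < lam
  · have ht2 : t ^ 2 < lam ^ 2 := by nlinarith [sq_abs t, abs_nonneg t]
    simp only [hardRidgeThresh, if_pos h] at hθ ⊢
    rw [if_neg (by simp), if_pos hθ]
    have key : ((t - θ) ^ 2 / 2 + lam ^ 2 / (2 * (1 + eta)) + eta / 2 * θ ^ 2)
        - ((t - 0) ^ 2 / 2 + 0 + eta / 2 * 0 ^ 2)
        = (((1 + eta) * θ - t) ^ 2 + (lam ^ 2 - t ^ 2)) / (2 * (1 + eta)) := by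
      field_simp
      ring
    nlinarith [key, sq_nonneg ((1 + eta) * θ - t),
      div_pos (by nlinarith [sq_nonneg ((1 + eta) * θ - t)] :
        (0:ℝ) < ((1 + eta) * θ - t) ^ 2 + (lam ^ 2 - t ^ 2)) (by positivity : (0:ℝ) < 2 * (1 + eta))]
  · have habs : lam < |t| := lt_of_le_of_ne (not_lt.mp h) (Ne.symm ht)
    have ht2 : lam ^ 2 < t ^ 2 := by nlinarith [sq_abs t, abs_nonneg t]
    have htne : t ≠ 0 := by
      intro h0; rw [h0, abs_zero] at habs; linarith
    simp only [hardRidgeThresh, if_neg h] at hθ ⊢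
    have hne : t / (1 + eta) ≠ 0 := div_ne_zero htne hc'
    rw [if_pos hne]
    by_cases hz : θ = 0
    · subst hz
      rw [if_neg (by simp)]
      have key : ((t - 0) ^ 2 / 2 + 0 + eta / 2 * 0 ^ 2)
          - ((t - t / (1 + eta)) ^ 2 / 2 + lam ^ 2 / (2 * (1 + eta))
            + eta / 2 * (t / (1 + eta)) ^ 2)
          = (t ^ 2 - lam ^ 2) / (2 * (1 + eta)) := by
        field_simp
        ring
      nlinarith [key, div_pos (by linarith : (0:ℝ) < t ^ 2 - lam ^ 2)
        (by positivity : (0:ℝ) < 2 * (1 + eta))]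
    · rw [if_pos hz]
      have hd : (1 + eta) * θ - t ≠ 0 := by
        intro hcontra
        apply hθ
        field_simp
        linarith
      have hsq : 0 < ((1 + eta) * θ - t) ^ 2 := by positivity
      have key : ((t - θ) ^ 2 / 2 + lam ^ 2 / (2 * (1 + eta)) + eta / 2 * θ ^ 2)
          - ((t - t / (1 + eta)) ^ 2 / 2 + lam ^ 2 / (2 * (1 + eta))
            + eta / 2 * (t / (1 + eta)) ^ 2)
          = ((1 + eta) * θ - t) ^ 2 / (2 * (1 + eta)) := by
        field_simp
        ring
      nlinarith [key, div_pos hsq (by positivity : (0:ℝ) < 2 * (1 + eta))]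
end

section
/- Let X ∈ ℝ^{n×p} have full column rank, H = X(XᵀX)⁻¹Xᵀ the hat matrix, and Θ a thresholding rule applied componentwise. If γ̂ ∈ ℝⁿ is a fixed point of γ = Θ(Hγ + (I−H)y; λ) and β̂ = (XᵀX)⁻¹Xᵀ(y − γ̂), and if ψ(t;λ) is defined by ψ(t;λ) = t − Θ(t;λ), then Xᵀψ(y − Xβ̂; λ) = 0, i.e., β̂ is an M-estimate associated with ψ. -/
open Matrix

lemma aux_isUnit (p : ℕ) (A : Matrix (Fin p) (Fin p) ℝ) (h : A.rank = p) : IsUnit A := by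
  rw [Matrix.isUnit_iff_isUnit_det, ← LinearMap.det_toLin' A]
  have hsurj : Function.Surjective A.toLin' := by
    rw [← LinearMap.range_eq_top]
    apply Submodule.eq_top_of_finrank_eq
    have : A.toLin' = A.mulVecLin := by rw [Matrix.toLin'_apply']
    rw [this]
    simpa [Matrix.rank] using h.trans (by simp)
  have hbij : Function.Bijective A.toLin' :=
    ⟨(LinearMap.injective_iff_surjective).mpr hsurj, hsurj⟩
  exact (LinearEquiv.ofBijective A.toLin' hbij).isUnit_det'

theorem IPOD_fixed_point_is_M_estimate
    (n p : ℕ) (X : Matrix (Fin n) (Fin p) ℝ) (hrank : X.rank = p)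
    (y : Fin n → ℝ) (Θ : ℝ → ℝ → ℝ) (lam : Fin n → ℝ)
    (H : Matrix (Fin n) (Fin n) ℝ) (hH : H = X * (Xᵀ * X)⁻¹ * Xᵀ)
    (γhat : Fin n → ℝ)
    (hfix : ∀ i, γhat i = Θ ((H.mulVec γhat + (1 - H).mulVec y) i) (lam i))
    (βhat : Fin p → ℝ) (hβ : βhat = (Xᵀ * X)⁻¹.mulVec (Xᵀ.mulVec (y - γhat)))
    (ψ : ℝ → ℝ → ℝ) (hψ : ∀ t l, ψ t l = t - Θ t l) :
    Xᵀ.mulVec (fun i => ψ ((y - X.mulVec βhat) i) (lam i)) = 0 := by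
  have hA : IsUnit (Xᵀ * X) := aux_isUnit p _ (by rw [Matrix.rank_transpose_mul_self, hrank])
  have hAdet : IsUnit (Xᵀ * X).det := (Matrix.isUnit_iff_isUnit_det _).mp hA
  -- residual identity: y - Xβ̂ = Hγ̂ + (I-H)y
  have hres : y - X.mulVec βhat = H.mulVec γhat + (1 - H).mulVec y := by
    subst hβ hH
    rw [Matrix.mulVec_mulVec, Matrix.mulVec_mulVec, Matrix.sub_mulVec, Matrix.one_mulVec,
      Matrix.mulVec_sub]
    abel
  -- the ψ vector equals (y - Xβ̂) - γ̂
  have hpsi : (fun i => ψ ((y - X.mulVec βhat) i) (lam i))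
      = (y - X.mulVec βhat) - γhat := by
    funext i
    rw [hψ, hres, ← hfix i]
    rfl
  rw [hpsi, hres]
  have hvec : H.mulVec γhat + (1 - H).mulVec y - γhat = (1 - H).mulVec (y - γhat) := by
    rw [Matrix.sub_mulVec, Matrix.sub_mulVec, Matrix.one_mulVec, Matrix.one_mulVec,
      Matrix.mulVec_sub]
    abel
  rw [hvec, Matrix.mulVec_mulVec]
  have hXtH : Xᵀ * (1 - H) = 0 := by
    rw [hH, Matrix.mul_sub, Matrix.mul_one, ← Matrix.mul_assoc, ← Matrix.mul_assoc,
      Matrix.mul_nonsing_inv _ hAdet, Matrix.one_mul, sub_self]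
  rw [hXtH, Matrix.zero_mulVec]
end

section
/- Let Θ be a thresholding rule continuous at a point t > 0, let P_Θ(θ;λ) = ∫₀^{|θ|}(Θ⁻¹(u;λ)−u)du be its constructed penalty, and let P(θ;λ) = P(0;λ) + P_Θ(θ;λ) + q(θ;λ) where q ≥ 0 and q(Θ(s;λ);λ) = 0 for all s. Then θ̂ = Θ(t;λ) is the unique global minimizer of f(θ) = (t−θ)²/2 + P(θ;λ) over θ ∈ ℝ. -/
theorem theta_unique_minimizer_general (lam : ℝ) (Θ : ℝ → ℝ)
    (hodd : ∀ t : ℝ, Θ (-t) = -Θ t)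
    (hmono : ∀ t t' : ℝ, t ≤ t' → Θ t ≤ Θ t')
    (htend : Filter.Tendsto Θ Filter.atTop Filter.atTop)
    (hshrink : ∀ t : ℝ, 0 ≤ t → 0 ≤ Θ t ∧ Θ t ≤ t)
    (t : ℝ) (ht : 0 < t) (hcont : ContinuousAt Θ t)
    (Θinv : ℝ → ℝ) (hΘinv : ∀ u : ℝ, 0 ≤ u → Θinv u = sSup {s : ℝ | Θ s ≤ u})
    (PΘ : ℝ → ℝ) (hPΘ : ∀ θ : ℝ, PΘ θ = ∫ u in (0 : ℝ)..(|θ|), (Θinv u - u))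
    (q P : ℝ → ℝ)
    (hq : ∀ θ : ℝ, 0 ≤ q θ) (hqΘ : ∀ s : ℝ, q (Θ s) = 0)
    (hP : ∀ θ : ℝ, P θ = P 0 + PΘ θ + q θ) :
    ∀ θ : ℝ, θ ≠ Θ t →
      (t - Θ t) ^ 2 / 2 + P (Θ t) < (t - θ) ^ 2 / 2 + P θ := by
  intro θ hθne
  have hΘ0 : Θ 0 = 0 := by
    have h := hodd 0
    simp only [neg_zero] at h
    linarith
  have hT0 : 0 ≤ Θ t := (hshrink t ht.le).1
  -- the superlevel sets are bounded above and nonempty (for u ≥ 0)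
  have hbdd : ∀ u : ℝ, BddAbove {s : ℝ | Θ s ≤ u} := by
    intro u
    obtain ⟨s, hs⟩ := (htend.eventually (Filter.eventually_gt_atTop u)).exists
    refine ⟨s, fun x hx => ?_⟩
    by_contra h
    push_neg at h
    have := hmono s x h.le
    simp only [Set.mem_setOf_eq] at hx
    linarith
  have hne : ∀ u : ℝ, 0 ≤ u → Set.Nonempty {s : ℝ | Θ s ≤ u} :=
    fun u hu => ⟨0, by simpa [hΘ0] using hu⟩
  -- t ≤ Θinv u for u ≥ Θ t
  have hge : ∀ u : ℝ, Θ t ≤ u → t ≤ Θinv u := by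
    intro u hu
    rw [hΘinv u (hT0.trans hu)]
    exact le_csSup (hbdd u) hu
  -- t < Θinv u for u > Θ t (uses continuity at t)
  have hgt : ∀ u : ℝ, Θ t < u → t < Θinv u := by
    intro u hu
    have h1 : Θ ⁻¹' Set.Iio u ∈ nhds t := hcont (Iio_mem_nhds hu)
    have h2 : Θ ⁻¹' Set.Iio u ∈ nhdsWithin t (Set.Ioi t) := nhdsWithin_le_nhds h1
    obtain ⟨s, hs1, hs2⟩ := Filter.nonempty_of_mem (Filter.inter_mem h2 self_mem_nhdsWithin)
    have hsmem : s ∈ {s : ℝ | Θ s ≤ u} := le_of_lt (by simpa using hs1)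
    have : s ≤ Θinv u := by
      rw [hΘinv u (hT0.trans hu.le)]
      exact le_csSup (hbdd u) hsmem
    exact lt_of_lt_of_le hs2 this
  -- Θinv u < t for 0 ≤ u < Θ t (uses continuity at t)
  have hlt : ∀ u : ℝ, 0 ≤ u → u < Θ t → Θinv u < t := by
    intro u hu0 hu
    have h1 : Θ ⁻¹' Set.Ioi u ∈ nhds t := hcont (Ioi_mem_nhds hu)
    have h2 : Θ ⁻¹' Set.Ioi u ∈ nhdsWithin t (Set.Iio t) := nhdsWithin_le_nhds h1
    obtain ⟨s, hs1, hs2⟩ := Filter.nonempty_of_mem (Filter.inter_mem h2 self_mem_nhdsWithin)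
    have hub : ∀ x ∈ {s : ℝ | Θ s ≤ u}, x ≤ s := by
      intro x hx
      by_contra h
      push_neg at h
      have := hmono s x h.le
      simp only [Set.mem_setOf_eq] at hx
      simp only [Set.mem_preimage, Set.mem_Ioi] at hs1
      linarith
    have : Θinv u ≤ s := by
      rw [hΘinv u hu0]
      exact csSup_le (hne u hu0) hub
    exact lt_of_le_of_lt this hs2
  -- monotonicity of Θinv on [0, ∞)
  have hmonoInv : MonotoneOn Θinv (Set.Ici (0:ℝ)) := by
    intro u hu v hv huv
    rw [hΘinv u hu, hΘinv v hv]
    exact csSup_le_csSup (hbdd v) (hne u hu) (fun s hs => le_trans hs huv)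
  -- integrability
  have hIntInv : ∀ a b : ℝ, 0 ≤ a → 0 ≤ b →
      IntervalIntegrable Θinv MeasureTheory.volume a b := by
    intro a b ha hb
    apply MonotoneOn.intervalIntegrable
    apply hmonoInv.mono
    intro x hx
    have : min a b ≤ x := by
      rw [Set.uIcc] at hx
      exact hx.1
    exact le_trans (le_min ha hb) this
  have hIntSub : ∀ a b : ℝ, 0 ≤ a → 0 ≤ b →
      IntervalIntegrable (fun u => Θinv u - u) MeasureTheory.volume a b :=
    fun a b ha hb => (hIntInv a b ha hb).sub (continuous_id.intervalIntegrable a b)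
  have hIntSubT : ∀ a b : ℝ, 0 ≤ a → 0 ≤ b →
      IntervalIntegrable (fun u => Θinv u - t) MeasureTheory.volume a b :=
    fun a b ha hb => (hIntInv a b ha hb).sub (continuous_const.intervalIntegrable a b)
  have hIntSubT' : ∀ a b : ℝ, 0 ≤ a → 0 ≤ b →
      IntervalIntegrable (fun u => t - Θinv u) MeasureTheory.volume a b :=
    fun a b ha hb => (continuous_const.intervalIntegrable a b).sub (hIntInv a b ha hb)
  -- key identity for x ≥ 0
  have hkey : ∀ x : ℝ, 0 ≤ x →
      ((t - x) ^ 2 / 2 + P x) - ((t - Θ t) ^ 2 / 2 + P (Θ t)) =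
        (∫ u in (Θ t)..x, (Θinv u - t)) + q x := by
    intro x hx
    have hq0 : q (Θ t) = 0 := hqΘ t
    rw [hP x, hP (Θ t), hPΘ x, hPΘ (Θ t), abs_of_nonneg hx, abs_of_nonneg hT0, hq0]
    have hsplit : (∫ u in (0:ℝ)..(Θ t), (Θinv u - u)) + (∫ u in (Θ t)..x, (Θinv u - u))
        = ∫ u in (0:ℝ)..x, (Θinv u - u) :=
      intervalIntegral.integral_add_adjacent_intervals
        (hIntSub 0 (Θ t) le_rfl hT0) (hIntSub (Θ t) x hT0 hx)
    have hc1 : IntervalIntegrable (fun u : ℝ => u - t) MeasureTheory.volume (Θ t) x :=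
      Continuous.intervalIntegrable (by continuity) _ _
    have hc2 : IntervalIntegrable (fun u : ℝ => u) MeasureTheory.volume (Θ t) x :=
      Continuous.intervalIntegrable (by continuity) _ _
    have h2 : (∫ u in (Θ t)..x, (Θinv u - t)) =
        (∫ u in (Θ t)..x, (Θinv u - u)) + (∫ u in (Θ t)..x, (u - t)) := by
      rw [← intervalIntegral.integral_add (hIntSub (Θ t) x hT0 hx) hc1]
      congr 1
      funext u
      ring
    have h3 : (∫ u in (Θ t)..x, (u - t)) = (x ^ 2 - (Θ t) ^ 2) / 2 - t * (x - Θ t) := by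
      have h4 : (∫ u in (Θ t)..x, (u - t)) =
          (∫ u in (Θ t)..x, u) - (∫ u in (Θ t)..x, (t : ℝ)) :=
        intervalIntegral.integral_sub hc2 (intervalIntegrable_const)
      rw [h4, integral_id, intervalIntegral.integral_const]
      simp
      ring
    rw [h2, h3]
    nlinarith [hsplit]
  -- strict positivity of the integral term
  have hpos : ∀ x : ℝ, Θ t < x → 0 < ∫ u in (Θ t)..x, (Θinv u - t) := by
    intro x hx
    apply intervalIntegral.intervalIntegral_pos_of_pos_on
      (hIntSubT (Θ t) x hT0 (hT0.trans hx.le))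
    · intro u hu
      exact sub_pos.mpr (hgt u hu.1)
    · exact hx
  have hneg : ∀ x : ℝ, 0 ≤ x → x < Θ t → 0 < ∫ u in x..(Θ t), (t - Θinv u) := by
    intro x hx0 hx
    apply intervalIntegral.intervalIntegral_pos_of_pos_on
      (hIntSubT' x (Θ t) hx0 hT0)
    · intro u hu
      exact sub_pos.mpr (hlt u (hx0.trans hu.1.le) hu.2)
    · exact hx
  -- relate the two forms of the integral
  have hflip : ∀ x : ℝ,
      (∫ u in (Θ t)..x, (Θinv u - t)) = ∫ u in x..(Θ t), (t - Θinv u) := by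
    intro x
    rw [intervalIntegral.integral_symm x (Θ t), ← intervalIntegral.integral_neg]
    congr 1
    funext u
    ring
  -- final assembly
  rcases le_or_gt 0 θ with hθ0 | hθ0
  · have hk := hkey θ hθ0
    rcases lt_or_gt_of_ne hθne with hcase | hcase
    · have h1 := hneg θ hθ0 hcase
      have h2 := hflip θ
      have h3 := hq θ
      linarith
    · have h1 := hpos θ hcase
      have h3 := hq θ
      linarith
  · obtain ⟨x, hxdef⟩ : ∃ x : ℝ, x = -θ := ⟨-θ, rfl⟩
    have hx0 : 0 < x := by rw [hxdef]; linarith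
    have hk := hkey x hx0.le
    have hPθ : P θ = P 0 + PΘ x + q θ := by
      rw [hP θ]
      congr 2
      rw [hPΘ θ, hPΘ x, abs_of_neg hθ0, abs_of_nonneg hx0.le, hxdef]
    have hPx : P x = P 0 + PΘ x + q x := hP x
    have hnonneg : 0 ≤ ∫ u in (Θ t)..x, (Θinv u - t) := by
      rcases lt_trichotomy x (Θ t) with h | h | h
      · have := hneg x hx0.le h
        rw [hflip x]
        linarith
      · rw [h, intervalIntegral.integral_same]
      · exact (hpos x h).le
    have hsq : (t - x) ^ 2 < (t - θ) ^ 2 := by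
      have : θ = -x := by rw [hxdef]; ring
      rw [this]
      nlinarith
    have h3 := hq θ
    have h4 := hq x
    linarith
end

section
/- For hard thresholding with λ > 0, define q(x;λ) = (λ−|x|)²/2 for 0 < |x| < λ and q(x;λ) = 0 for x = 0 or |x| ≥ λ. Then the L0 penalty P(x;λ) = (λ²/2)·1_{x≠0} satisfies P(x;λ) = P_hard(x;λ) + q(x;λ), where P_hard(x;λ) = (λ|x|−x²/2)·1_{|x|<λ} + (λ²/2)·1_{|x|≥λ}, and q is nonnegative with q(Θ_hard(t;λ);λ) = 0 for all t. -/
/-- Hard-thresholding function. -/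
noncomputable def hardThresh (t lam : ℝ) : ℝ := if |t| ≤ lam then 0 else t

theorem L0_penalty_decomposition (lam : ℝ) (hlam : 0 < lam)
    (q : ℝ → ℝ)
    (hq : ∀ x : ℝ, q x = if 0 < |x| ∧ |x| < lam then (lam - |x|) ^ 2 / 2 else 0)
    (Phard : ℝ → ℝ)
    (hPhard : ∀ x : ℝ, Phard x =
      if |x| < lam then lam * |x| - x ^ 2 / 2 else lam ^ 2 / 2)
    (P : ℝ → ℝ) (hP : ∀ x : ℝ, P x = if x ≠ 0 then lam ^ 2 / 2 else 0) :
    (∀ x : ℝ, P x = Phard x + q x) ∧ (∀ x : ℝ, 0 ≤ q x) ∧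
      (∀ t : ℝ, q (hardThresh t lam) = 0) := by
  refine ⟨?_, ?_, ?_⟩
  · intro x
    rw [hq, hP, hPhard]
    split_ifs with h1 h2 h3 h4 h5 <;>
      simp_all [abs_pos, sq_abs, not_lt] <;> nlinarith [sq_abs x]
  · intro x
    rw [hq]
    split
    · positivity
    · exact le_refl 0
  · intro t
    rw [hq, hardThresh]
    split
    · simp
    · rename_i h
      push_neg at h
      simp [not_lt.mpr h.le]
end
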